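/- Let x* be a feasible point of (NSDP), let s = dim Ker(g(x*)), and suppose 𝒰 : N_M → ℝ^{m×s} is a continuous map on a neighborhood N_M of g(x*) in S^m such that the columns of 𝒰(g(x*)) form an orthonormal basis of Ker(g(x*)) and, for every M ∈ N_M, the columns of 𝒰(M) are orthonormal and span the invariant subspace of M associated with its s smallest eigenvalues. For x with g(x) ∈ N_M define S(x,x*) = {d ∈ ℝⁿ : 𝒰(g(x))ᵀ Dg(x)[d] 𝒰(g(x)) = 0 and Dh(x)d = 0}, and let ū₁(x),…,ū_s(x) be the columns of 𝒰(g(x)) and v̄_{ij}(x) = (ū_i(x)ᵀ ∂₁g(x) ū_j(x), …, ū_i(x)ᵀ ∂ₙg(x) ū_j(x)) ∈ ℝⁿ. Then the weak constant rank property holds at x* — i.e. there is a neighborhood N of x* on which the dimension of the span of {v̄_{ij}(x) : 1 ≤ i ≤ j ≤ s} ∪ {∇h_i(x) : i = 1,…,p} is the same for all x ∈ N — if and only if the set-valued map x ↦ S(x,x*) is inner semicontinuous at x*, meaning that for every d ∈ S(x*,x*) and every sequence xᵏ → x* there exist dᵏ → d with dᵏ ∈ S(xᵏ,x*) for all k.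 -/

import Mathlib

/-!
STATEMENT 13: For NSDP, the weak constant rank property at a feasible point x*
holds iff the perturbed critical subspace map x ↦ S(x, x*) is inner
semicontinuous at x*.
-/

open Filter Topology Set Matrix
open scoped InnerProductSpace

attribute [local instance]
  Matrix.frobeniusSeminormedAddCommGroup Matrix.frobeniusNormedAddCommGroup
  Matrix.frobeniusNormedSpace

def euclOf {n : ℕ} (v : Fin n → ℝ) : EuclideanSpace ℝ (Fin n) := WithLp.toLp 2 v

/-- The perturbed critical subspace
`S(x, x*) = {d : 𝒰(g(x))ᵀ Dg(x)[d] 𝒰(g(x)) = 0, Dh(x)d = 0}`. -/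
def Ssdp {n p m s : ℕ}
    (g : EuclideanSpace ℝ (Fin n) → Matrix (Fin m) (Fin m) ℝ)
    (h : EuclideanSpace ℝ (Fin n) → EuclideanSpace ℝ (Fin p))
    (𝒰 : Matrix (Fin m) (Fin m) ℝ → Matrix (Fin m) (Fin s) ℝ)
    (x : EuclideanSpace ℝ (Fin n)) : Set (EuclideanSpace ℝ (Fin n)) :=
  {d | (𝒰 (g x))ᵀ * fderiv ℝ g x d * 𝒰 (g x) = 0 ∧ fderiv ℝ h x d = 0}

/-! ### Auxiliary lemmas -/

section Aux

variable {E : Type*} [NormedAddCommGroup E] [InnerProductSpace ℝ E]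

/-- Gram matrix of a finite family of vectors. -/
noncomputable def gramM {ι : Type*} [Fintype ι] (v : ι → E) : Matrix ι ι ℝ :=
  Matrix.of fun i j => ⟪v i, v j⟫_ℝ

lemma gram_mulVec {ι : Type*} [Fintype ι] (v : ι → E) (c : ι → ℝ) (j : ι) :
    (gramM v *ᵥ c) j = ⟪v j, ∑ i, c i • v i⟫_ℝ := by
  simp [gramM, Matrix.mulVec, dotProduct, inner_sum, real_inner_smul_right, mul_comm]

lemma gram_det_ne_zero_iff {ι : Type*} [Fintype ι] [DecidableEq ι] (v : ι → E) :
    (gramM v).det ≠ 0 ↔ LinearIndependent ℝ v := by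
  rw [← not_iff_not, not_not, ← Matrix.exists_mulVec_eq_zero_iff]
  constructor
  · rintro ⟨c, hc0, hc⟩
    rw [Fintype.not_linearIndependent_iff]
    refine ⟨c, ?_, ?_⟩
    · have h2 : ⟪∑ i, c i • v i, ∑ i, c i • v i⟫_ℝ = 0 := by
        rw [sum_inner]
        have : ∀ i, ⟪c i • v i, ∑ j, c j • v j⟫_ℝ = c i * (gramM v *ᵥ c) i := by
          intro i; rw [gram_mulVec, real_inner_smul_left]
        simp only [this, hc]
        simp
      exact inner_self_eq_zero.mp h2
    · obtain ⟨i, hi⟩ := Function.ne_iff.mp hc0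
      exact ⟨i, hi⟩
  · intro h
    rw [Fintype.not_linearIndependent_iff] at h
    obtain ⟨c, hsum, i, hi⟩ := h
    refine ⟨c, Function.ne_iff.mpr ⟨i, hi⟩, ?_⟩
    funext j
    rw [gram_mulVec]
    simp [hsum]

lemma mem_orth_span_range_iff {ι : Type*} (v : ι → E) (d : E) :
    (∀ i, ⟪v i, d⟫_ℝ = 0) ↔ ∀ u ∈ Submodule.span ℝ (Set.range v), ⟪u, d⟫_ℝ = 0 := by
  constructor
  · intro h u hu
    induction hu using Submodule.span_induction with
    | mem u hu => obtain ⟨i, rfl⟩ := hu; exact h i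
    | zero => simp
    | add u w _ _ hu hw => rw [inner_add_left, hu, hw, add_zero]
    | smul a u _ hu => rw [real_inner_smul_left, hu, mul_zero]
  · intro h i
    exact h _ (Submodule.subset_span (Set.mem_range_self i))

/-- The abstract equivalence: constant rank of a continuous finite family of
vectors near a point is equivalent to inner semicontinuity of the orthogonal
(kernel) map along sequences. -/
lemma key_wcr_isc {ι X : Type*} [Fintype ι] [DecidableEq ι] [MetricSpace X]
    [FiniteDimensional ℝ E]
    (v : X → ι → E) (xs : X) (hv : ∀ i, ContinuousAt (fun x => v x i) xs) :
    (∃ N ∈ 𝓝 xs, ∃ c : ℕ, ∀ x ∈ N,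
        Module.finrank ℝ (Submodule.span ℝ (Set.range (v x))) = c) ↔
    (∀ d : E, (∀ i, ⟪v xs i, d⟫_ℝ = 0) → ∀ xk : ℕ → X, Tendsto xk atTop (𝓝 xs) →
      ∃ dk : ℕ → E, Tendsto dk atTop (𝓝 d) ∧ ∀ k i, ⟪v (xk k) i, dk k⟫_ℝ = 0) := by
  classical
  -- choose an independent spanning subfamily at `xs`
  obtain ⟨b, hbsub, hbspan, hbind⟩ := exists_linearIndependent ℝ (Set.range (v xs))
  have hbfin : b.Finite := hbind.setFinite
  haveI : Fintype b := hbfin.fintype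
  have hφ : ∀ e : b, ∃ i, v xs i = e := fun e => hbsub e.2
  set φ : b → ι := fun e => (hφ e).choose with hφdef
  have hφspec : ∀ e : b, v xs (φ e) = e := fun e => (hφ e).choose_spec
  set w : X → b → E := fun x e => v x (φ e) with hwdef
  have hw0 : w xs = Subtype.val := funext fun e => hφspec e
  -- the rank at `xs` equals the cardinality of `b`
  have hcard : Module.finrank ℝ (Submodule.span ℝ (Set.range (v xs))) = Fintype.card b := by
    have h1 : Submodule.span ℝ (Set.range ((↑) : b → E)) = Submodule.span ℝ (Set.range (v xs)) := by
      rw [Subtype.range_coe]; exact hbspan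
    rw [← h1]; exact finrank_span_eq_card hbind
  -- continuity of the Gram matrix of `w`
  have hwcont : ∀ e : b, ContinuousAt (fun x => w x e) xs := fun e => hv (φ e)
  have hGcont : ContinuousAt (fun x => gramM (w x)) xs := by
    apply continuousAt_pi.mpr; intro e
    apply continuousAt_pi.mpr; intro f
    exact (hwcont e).inner (hwcont f)
  have hdetcont : ContinuousAt (fun x => (gramM (w x)).det) xs :=
    (continuous_id.matrix_det).continuousAt.comp hGcont
  have hdet0 : (gramM (w xs)).det ≠ 0 := by
    rw [gram_det_ne_zero_iff, hw0]; exact hbind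
  have hdetev : ∀ᶠ x in 𝓝 xs, (gramM (w x)).det ≠ 0 :=
    hdetcont (IsOpen.mem_nhds isOpen_ne hdet0)
  -- independence of `w x` gives a rank lower bound
  have hranklow : ∀ x, (gramM (w x)).det ≠ 0 →
      Fintype.card b ≤ Module.finrank ℝ (Submodule.span ℝ (Set.range (v x))) := by
    intro x hx
    have hind : LinearIndependent ℝ (w x) := (gram_det_ne_zero_iff _).mp hx
    have h1 : Module.finrank ℝ (Submodule.span ℝ (Set.range (w x))) = Fintype.card b :=
      finrank_span_eq_card hind
    have h2 : Submodule.span ℝ (Set.range (w x)) ≤ Submodule.span ℝ (Set.range (v x)) := by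
      apply Submodule.span_mono
      rintro _ ⟨e, rfl⟩; exact Set.mem_range_self (φ e)
    calc Fintype.card b = _ := h1.symm
      _ ≤ _ := Submodule.finrank_mono h2
  constructor
  · -- WCR ⇒ inner semicontinuity
    rintro ⟨N, hN, c, hc⟩ d hd xk hxk
    have hrc : c = Fintype.card b := by rw [← hc xs (mem_of_mem_nhds hN), hcard]
    -- the correction coefficients and corrected vector
    set bv : X → b → ℝ := fun x e => ⟪w x e, d⟫_ℝ with hbv
    set cv : X → b → ℝ := fun x => (gramM (w x))⁻¹ *ᵥ bv x with hcv
    set d0 : X → E := fun x => d - ∑ e, cv x e • w x e with hd0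
    have hbv0 : bv xs = 0 := by
      funext e; simp only [hbv, hw0]
      have := hd (φ e); rwa [hφspec e] at this
    have hcv0 : cv xs = 0 := by
      have h1 : cv xs = (gramM (w xs))⁻¹ *ᵥ bv xs := rfl
      rw [h1, hbv0, Matrix.mulVec_zero]
    have hd00 : d0 xs = d := by rw [hd0]; simp [hcv0]
    -- continuity of `d0` at `xs`
    have hinvcont : ContinuousAt (fun x => (gramM (w x))⁻¹) xs := by
      have : (fun x => (gramM (w x))⁻¹)
          = fun x => ((gramM (w x)).det)⁻¹ • (gramM (w x)).adjugate := by
        funext x; rw [Matrix.inv_def, Ring.inverse_eq_inv']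
      rw [this]
      exact (hdetcont.inv₀ hdet0).smul
        ((continuous_id.matrix_adjugate).continuousAt.comp hGcont)
    have hbvcont : ContinuousAt (fun x => bv x) xs := by
      apply continuousAt_pi.mpr; intro e
      exact (hwcont e).inner continuousAt_const
    have hcvcont : ContinuousAt (fun x => cv x) xs := by
      apply continuousAt_pi.mpr; intro e
      simp only [hcv, Matrix.mulVec, dotProduct]
      exact tendsto_finset_sum _ fun f _ =>
        (((continuousAt_pi.mp (continuousAt_pi.mp hinvcont e)) f).mul
          (continuousAt_pi.mp hbvcont f))
    have hd0cont : ContinuousAt d0 xs := by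
      apply continuousAt_const.sub
      exact tendsto_finset_sum _ fun e _ =>
        ((continuousAt_pi.mp hcvcont e).smul (hwcont e))
    -- the approximating sequence
    set dk : ℕ → E := fun k =>
      if (gramM (w (xk k))).det ≠ 0 ∧ xk k ∈ N then d0 (xk k) else 0 with hdk
    have hNe : ∀ᶠ x in 𝓝 xs, x ∈ N := hN
    have hev : ∀ᶠ k in atTop, (gramM (w (xk k))).det ≠ 0 ∧ xk k ∈ N :=
      hxk.eventually (hdetev.and hNe)
    refine ⟨dk, ?_, ?_⟩
    · have h1 : Tendsto (fun k => d0 (xk k)) atTop (𝓝 d) := by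
        rw [← hd00]; exact hd0cont.tendsto.comp hxk
      refine h1.congr' ?_
      exact hev.mono fun k hk => by rw [hdk]; simp [hk]
    · intro k i
      by_cases hk : (gramM (w (xk k))).det ≠ 0 ∧ xk k ∈ N
      · have hdkk : dk k = d0 (xk k) := by rw [hdk]; simp [hk]
        rw [hdkk]
        -- first: perpendicular to the `w` family
        have hperpw : ∀ e : b, ⟪w (xk k) e, d0 (xk k)⟫_ℝ = 0 := by
          intro e
          have hG1 : gramM (w (xk k)) * (gramM (w (xk k)))⁻¹ = 1 :=
            Matrix.mul_nonsing_inv _ (isUnit_iff_ne_zero.mpr hk.1)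
          have : (gramM (w (xk k)) *ᵥ cv (xk k)) = bv (xk k) := by
            rw [hcv, Matrix.mulVec_mulVec, hG1, Matrix.one_mulVec]
          calc ⟪w (xk k) e, d0 (xk k)⟫_ℝ
              = bv (xk k) e - (gramM (w (xk k)) *ᵥ cv (xk k)) e := by
                rw [hd0, inner_sub_right, gram_mulVec]
            _ = 0 := by rw [this, sub_self]
        -- the `w` family spans everything at `xk k`
        have hspaneq : Submodule.span ℝ (Set.range (w (xk k)))
            = Submodule.span ℝ (Set.range (v (xk k))) := by
          apply Submodule.eq_of_le_of_finrank_le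
          · apply Submodule.span_mono
            rintro _ ⟨e, rfl⟩; exact Set.mem_range_self (φ e)
          · rw [finrank_span_eq_card ((gram_det_ne_zero_iff _).mp hk.1),
              hc _ hk.2, hrc]
        have : ∀ u ∈ Submodule.span ℝ (Set.range (w (xk k))), ⟪u, d0 (xk k)⟫_ℝ = 0 :=
          (mem_orth_span_range_iff _ _).mp hperpw
        exact this _ (hspaneq ▸ Submodule.subset_span (Set.mem_range_self i))
      · have : dk k = 0 := by rw [hdk]; simp [hk]
        rw [this, inner_zero_right]
  · -- inner semicontinuity ⇒ WCR
    intro hisc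
    by_contra hwcr
    push_neg at hwcr
    obtain ⟨N1, hN1, hN1det⟩ := eventually_iff_exists_mem.mp hdetev
    -- extract a sequence with strictly larger rank
    have hxseq : ∀ k : ℕ, ∃ x, x ∈ N1 ∧ dist x xs < 1 / (k + 1) ∧
        Module.finrank ℝ (Submodule.span ℝ (Set.range (v x))) ≠ Fintype.card b := by
      intro k
      have hball : N1 ∩ Metric.ball xs (1 / (k + 1)) ∈ 𝓝 xs :=
        Filter.inter_mem hN1 (Metric.ball_mem_nhds xs (by positivity))
      obtain ⟨x, hxmem, hxne⟩ := hwcr _ hball (Fintype.card b)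
      exact ⟨x, hxmem.1, hxmem.2, hxne⟩
    choose xk hxkN1 hxkd hxkr using hxseq
    have hxktend : Tendsto xk atTop (𝓝 xs) := by
      rw [Metric.tendsto_atTop]
      intro ε hε
      obtain ⟨K, hK⟩ := exists_nat_one_div_lt hε
      refine ⟨K, fun k hk => lt_of_lt_of_le (hxkd k) (le_of_lt (lt_of_le_of_lt ?_ hK))⟩
      apply one_div_le_one_div_of_le (by positivity)
      have : (K : ℝ) ≤ k := by exact_mod_cast hk
      linarith
    -- the kernel at `xs` and a basis of it
    set K0 := (Submodule.span ℝ (Set.range (v xs)))ᗮ with hK0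
    set κ := Module.finrank ℝ K0 with hκ
    have hκsum : Fintype.card b + κ = Module.finrank ℝ E := by
      rw [hκ, hK0, ← hcard]
      exact Submodule.finrank_add_finrank_orthogonal _
    obtain dB := Module.finBasis ℝ K0
    set D : Fin κ → E := fun i => (dB i : E) with hD
    have hDind : LinearIndependent ℝ D :=
      dB.linearIndependent.map' K0.subtype (Submodule.ker_subtype K0)
    have hDmem : ∀ i, (∀ j, ⟪v xs j, D i⟫_ℝ = 0) := by
      intro i j
      exact ((Submodule.mem_orthogonal _ _).mp (dB i).2) _
        (Submodule.subset_span (Set.mem_range_self j))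
    -- approximate the basis along the sequence
    have hDk : ∀ i : Fin κ, ∃ Dk : ℕ → E, Tendsto Dk atTop (𝓝 (D i)) ∧
        ∀ k j, ⟪v (xk k) j, Dk k⟫_ℝ = 0 := fun i => hisc (D i) (hDmem i) xk hxktend
    choose Dk hDktend hDkperp using hDk
    -- the Gram matrices of the approximations converge to an invertible one
    have hgram_tend : Tendsto (fun k => (gramM (fun i : Fin κ => Dk i k)).det)
        atTop (𝓝 ((gramM D).det)) := by
      apply ((continuous_id.matrix_det).tendsto _).comp
      apply tendsto_pi_nhds.mpr; intro i
      apply tendsto_pi_nhds.mpr; intro j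
      exact Tendsto.inner (hDktend i) (hDktend j)
    have hgramD : (gramM D).det ≠ 0 := (gram_det_ne_zero_iff _).mpr hDind
    have : ∀ᶠ k in atTop, (gramM (fun i : Fin κ => Dk i k)).det ≠ 0 :=
      hgram_tend (IsOpen.mem_nhds isOpen_ne hgramD)
    obtain ⟨k0, hk0⟩ := this.exists
    -- at `k0` the kernel has dimension at least `κ`
    set Kk := (Submodule.span ℝ (Set.range (v (xk k0))))ᗮ with hKk
    have hmemKk : ∀ i, Dk i k0 ∈ Kk := by
      intro i
      rw [hKk, Submodule.mem_orthogonal]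
      intro u hu
      exact ((mem_orth_span_range_iff _ _).mp (fun j => hDkperp i k0 j)) u hu
    have hindk : LinearIndependent ℝ (fun i : Fin κ => Dk i k0) :=
      (gram_det_ne_zero_iff _).mp hk0
    have hκle : κ ≤ Module.finrank ℝ Kk := by
      have hind' : LinearIndependent ℝ (fun i : Fin κ => (⟨Dk i k0, hmemKk i⟩ : Kk)) := by
        apply LinearIndependent.of_comp Kk.subtype
        exact hindk
      simpa using hind'.fintype_card_le_finrank
    -- but the rank at `xk k0` is strictly larger than `card b`
    have hrankge : Fintype.card b ≤
        Module.finrank ℝ (Submodule.span ℝ (Set.range (v (xk k0)))) :=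
      hranklow _ (hN1det _ (hxkN1 k0))
    have hrankgt : Fintype.card b <
        Module.finrank ℝ (Submodule.span ℝ (Set.range (v (xk k0)))) :=
      lt_of_le_of_ne hrankge (Ne.symm (hxkr k0))
    have hsumk : Module.finrank ℝ (Submodule.span ℝ (Set.range (v (xk k0))))
        + Module.finrank ℝ Kk = Module.finrank ℝ E := by
      rw [hKk]; exact Submodule.finrank_add_finrank_orthogonal _
    omega

end Aux

section Bridge

lemma clm_decomp {n : ℕ} {F : Type*} [NormedAddCommGroup F] [NormedSpace ℝ F]
    (T : EuclideanSpace ℝ (Fin n) →L[ℝ] F) (d : EuclideanSpace ℝ (Fin n)) :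
    T d = ∑ ℓ, d ℓ • T (EuclideanSpace.single ℓ 1) := by
  have hd : d = ∑ ℓ, d ℓ • EuclideanSpace.single ℓ (1 : ℝ) := by
    ext r
    rw [WithLp.ofLp_sum, Fintype.sum_apply]
    simp [EuclideanSpace.single_apply]
  conv_lhs => rw [hd]
  rw [map_sum]
  simp

lemma fderiv_isSymm {n m : ℕ} (g : EuclideanSpace ℝ (Fin n) → Matrix (Fin m) (Fin m) ℝ)
    (hg : Differentiable ℝ g) (hgsym : ∀ x, (g x).IsSymm)
    (x : EuclideanSpace ℝ (Fin n)) (d : EuclideanSpace ℝ (Fin n)) :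
    (fderiv ℝ g x d).IsSymm := by
  let T : Matrix (Fin m) (Fin m) ℝ →L[ℝ] Matrix (Fin m) (Fin m) ℝ :=
    LinearMap.toContinuousLinearMap ((Matrix.transposeLinearEquiv (Fin m) (Fin m) ℝ ℝ).toLinearMap)
  have hTg : (fun y => T (g y)) = g := by
    funext y
    show (g y)ᵀ = g y
    exact hgsym y
  have h1 : HasFDerivAt (fun y => T (g y)) (T.comp (fderiv ℝ g x)) x :=
    T.hasFDerivAt.comp x (hg x).hasFDerivAt
  rw [hTg] at h1
  have h2 : T.comp (fderiv ℝ g x) = fderiv ℝ g x := h1.fderiv.symm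
  show (fderiv ℝ g x d)ᵀ = fderiv ℝ g x d
  conv_rhs => rw [← h2]
  rfl

lemma entry_eq {m s : ℕ} (U : Matrix (Fin m) (Fin s) ℝ) (A : Matrix (Fin m) (Fin m) ℝ)
    (i j : Fin s) :
    (Uᵀ * A * U) i j = (fun r => U r i) ⬝ᵥ A *ᵥ (fun r => U r j) := by
  simp only [Matrix.mul_apply, Matrix.transpose_apply, dotProduct, Matrix.mulVec,
    Finset.sum_mul, Finset.mul_sum]
  rw [Finset.sum_comm]
  congr 1; funext r; congr 1; funext t; ring

lemma gradient_inner {p n : ℕ} (h : EuclideanSpace ℝ (Fin n) → EuclideanSpace ℝ (Fin p))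
    (hh : Differentiable ℝ h) (x d : EuclideanSpace ℝ (Fin n)) (i : Fin p) :
    ⟪gradient (fun y => h y i) x, d⟫_ℝ = (fderiv ℝ h x d) i := by
  rw [gradient, InnerProductSpace.toDual_symm_apply]
  have h1 : HasFDerivAt ((EuclideanSpace.proj (𝕜 := ℝ) i) ∘ h)
      ((EuclideanSpace.proj i).comp (fderiv ℝ h x)) x :=
    (EuclideanSpace.proj i).hasFDerivAt.comp x (hh x).hasFDerivAt
  have hfun : ((EuclideanSpace.proj (𝕜 := ℝ) i) ∘ h) = fun y => h y i := by
    funext y; simp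
  rw [hfun] at h1
  rw [h1.fderiv]
  rfl

end Bridge

theorem stmt_13 {n p m s : ℕ}
    (f : EuclideanSpace ℝ (Fin n) → ℝ)
    (g : EuclideanSpace ℝ (Fin n) → Matrix (Fin m) (Fin m) ℝ)
    (h : EuclideanSpace ℝ (Fin n) → EuclideanSpace ℝ (Fin p))
    (hf : ContDiff ℝ 2 f) (hg : ContDiff ℝ 2 g) (hh : ContDiff ℝ 2 h)
    (hgsym : ∀ x, (g x).IsSymm)
    (xs : EuclideanSpace ℝ (Fin n))
    -- `xs` is feasible for (NSDP):
    (hfeas : (g xs).PosSemidef ∧ h xs = 0)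
    (hs : s = Module.finrank ℝ (LinearMap.ker (g xs).mulVecLin))
    -- `𝒰` is a continuous frame map on a neighborhood `NM` of `g(x*)`:
    (NM : Set (Matrix (Fin m) (Fin m) ℝ)) (hNM : NM ∈ 𝓝 (g xs))
    (𝒰 : Matrix (Fin m) (Fin m) ℝ → Matrix (Fin m) (Fin s) ℝ)
    (hUcont : ContinuousOn 𝒰 NM)
    -- the columns of `𝒰(g(x*))` form an orthonormal basis of `Ker g(x*)`:
    (hUorth0 : (𝒰 (g xs))ᵀ * 𝒰 (g xs) = 1)
    (hUspan0 : Submodule.span ℝ (Set.range fun j : Fin s => (fun i => 𝒰 (g xs) i j : Fin m → ℝ))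
      = LinearMap.ker (g xs).mulVecLin)
    -- for every `M` in the neighborhood, the columns of `𝒰 M` are orthonormal
    -- and span the invariant subspace of `M` associated with its `s` smallest
    -- eigenvalues:
    (hUframe : ∀ M ∈ NM, M.IsSymm →
      (𝒰 M)ᵀ * 𝒰 M = 1 ∧
      (∀ v ∈ Submodule.span ℝ (Set.range fun j : Fin s => (fun i => 𝒰 M i j : Fin m → ℝ)),
        M.mulVec v ∈
          Submodule.span ℝ (Set.range fun j : Fin s => (fun i => 𝒰 M i j : Fin m → ℝ))) ∧
      (∀ v ∈ Submodule.span ℝ (Set.range fun j : Fin s => (fun i => 𝒰 M i j : Fin m → ℝ)),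
        ∀ a : ℝ, v ≠ 0 → M.mulVec v = a • v →
          ∀ w : Fin m → ℝ, ∀ b : ℝ,
            (∀ u' ∈ Submodule.span ℝ
                (Set.range fun j : Fin s => (fun i => 𝒰 M i j : Fin m → ℝ)), w ⬝ᵥ u' = 0) →
            w ≠ 0 → M.mulVec w = b • w → a ≤ b)) :
    -- WCR at `xs`:
    ((∃ N ∈ 𝓝 xs, ∃ c : ℕ, ∀ x ∈ N,
      Module.finrank ℝ (Submodule.span ℝ (Set.range
        (Sum.elim
          (fun q : {q : Fin s × Fin s // q.1 ≤ q.2} =>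
            euclOf fun ℓ =>
              (fun i => 𝒰 (g x) i q.1.1 : Fin m → ℝ) ⬝ᵥ
                (fderiv ℝ g x (EuclideanSpace.single ℓ 1)).mulVec
                  (fun i => 𝒰 (g x) i q.1.2))
          (fun i : Fin p => gradient (fun y => h y i) x)))) = c)
    ↔
    -- inner semicontinuity of `x ↦ S(x, x*)` at `xs`:
    (∀ d ∈ Ssdp g h 𝒰 xs, ∀ xk : ℕ → EuclideanSpace ℝ (Fin n),
      Tendsto xk atTop (𝓝 xs) →
        ∃ dk : ℕ → EuclideanSpace ℝ (Fin n),
          Tendsto dk atTop (𝓝 d) ∧ ∀ k, dk k ∈ Ssdp g h 𝒰 (xk k))) := by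
  classical
  have hgdiff : Differentiable ℝ g := hg.differentiable two_ne_zero
  have hhdiff : Differentiable ℝ h := hh.differentiable two_ne_zero
  set V : EuclideanSpace ℝ (Fin n) → ({q : Fin s × Fin s // q.1 ≤ q.2} ⊕ Fin p) →
      EuclideanSpace ℝ (Fin n) := fun x =>
    Sum.elim
      (fun q : {q : Fin s × Fin s // q.1 ≤ q.2} =>
        euclOf fun ℓ =>
          (fun i => 𝒰 (g x) i q.1.1 : Fin m → ℝ) ⬝ᵥ
            (fderiv ℝ g x (EuclideanSpace.single ℓ 1)).mulVec
              (fun i => 𝒰 (g x) i q.1.2))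
      (fun i : Fin p => gradient (fun y => h y i) x) with hV
  -- the pointwise characterization of `Ssdp` as an orthogonality condition
  have hiff : ∀ x d, d ∈ Ssdp g h 𝒰 x ↔ ∀ i, ⟪V x i, d⟫_ℝ = 0 := by
    intro x d
    have hinner1 : ∀ q : {q : Fin s × Fin s // q.1 ≤ q.2},
        ⟪V x (Sum.inl q), d⟫_ℝ = ((𝒰 (g x))ᵀ * fderiv ℝ g x d * 𝒰 (g x)) q.1.1 q.1.2 := by
      intro q
      have hM : ((𝒰 (g x))ᵀ * fderiv ℝ g x d * 𝒰 (g x)) q.1.1 q.1.2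
          = ∑ ℓ, d ℓ * (((𝒰 (g x))ᵀ * fderiv ℝ g x (EuclideanSpace.single ℓ 1) * 𝒰 (g x))
              q.1.1 q.1.2) := by
        rw [show fderiv ℝ g x d = ∑ ℓ, d ℓ • fderiv ℝ g x (EuclideanSpace.single ℓ 1) from
          clm_decomp _ d, Matrix.mul_sum, Matrix.sum_mul]
        simp [Matrix.mul_smul, Matrix.smul_mul, Matrix.sum_apply, Matrix.smul_apply,
          smul_eq_mul]
      rw [hM]
      simp only [hV, Sum.elim_inl]
      rw [PiLp.inner_apply]
      apply Finset.sum_congr rfl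
      intro ℓ _
      rw [entry_eq]
      simp [euclOf, mul_comm]
    have hinner2 : ∀ i : Fin p, ⟪V x (Sum.inr i), d⟫_ℝ = (fderiv ℝ h x d) i := by
      intro i
      simp only [hV, Sum.elim_inr]
      exact gradient_inner h hhdiff x d i
    constructor
    · rintro ⟨h1, h2⟩ i
      rcases i with q | i
      · rw [hinner1 q, h1]; rfl
      · rw [hinner2 i, h2]; rfl
    · intro hall
      constructor
      · -- the matrix is symmetric, and its upper-triangular entries vanish
        have hsymm : ((𝒰 (g x))ᵀ * fderiv ℝ g x d * 𝒰 (g x)).IsSymm := by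
          have hA : (fderiv ℝ g x d)ᵀ = fderiv ℝ g x d := fderiv_isSymm g hgdiff hgsym x d
          show ((𝒰 (g x))ᵀ * fderiv ℝ g x d * 𝒰 (g x))ᵀ = _
          rw [Matrix.transpose_mul, Matrix.transpose_mul, Matrix.transpose_transpose, hA,
            Matrix.mul_assoc]
        ext i j
        rcases le_total i j with hij | hij
        · have := hall (Sum.inl ⟨(i, j), hij⟩)
          rw [hinner1] at this
          simpa using this
        · have := hall (Sum.inl ⟨(j, i), hij⟩)
          rw [hinner1] at this
          have hs2 : ((𝒰 (g x))ᵀ * fderiv ℝ g x d * 𝒰 (g x)) i j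
              = ((𝒰 (g x))ᵀ * fderiv ℝ g x d * 𝒰 (g x)) j i := by
            conv_lhs => rw [← hsymm]
            simp
          rw [hs2]
          simpa using this
      · ext i
        have := hall (Sum.inr i)
        rw [hinner2] at this
        simpa using this
  -- continuity of the family `V` at `xs`
  have hVcont : ∀ i, ContinuousAt (fun x => V x i) xs := by
    have hUgx : ContinuousAt (fun x => 𝒰 (g x)) xs :=
      (hUcont.continuousAt hNM).comp hg.continuous.continuousAt
    have hDg : Continuous (fderiv ℝ g) := hg.continuous_fderiv two_ne_zero
    rintro (q | i)
    · simp only [hV, Sum.elim_inl]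
      unfold euclOf
      refine (PiLp.continuous_toLp 2 _).continuousAt.comp ?_
      apply continuousAt_pi.mpr
      intro ℓ
      have hA : ContinuousAt (fun x => fderiv ℝ g x (EuclideanSpace.single ℓ 1)) xs := by
        exact ((ContinuousLinearMap.apply ℝ _ (EuclideanSpace.single ℓ (1:ℝ))).continuous.comp
          hDg).continuousAt
      have hAe : ∀ r t : Fin m, ContinuousAt
          (fun x => fderiv ℝ g x (EuclideanSpace.single ℓ 1) r t) xs := fun r t =>
        ((continuous_apply t).continuousAt.comp ((continuous_apply r).continuousAt.comp hA))
      have hUe : ∀ r : Fin m, ∀ c : Fin s, ContinuousAt (fun x => 𝒰 (g x) r c) xs := fun r c =>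
        ((continuous_apply c).continuousAt.comp ((continuous_apply r).continuousAt.comp hUgx))
      show ContinuousAt (fun x => (fun i => 𝒰 (g x) i q.1.1 : Fin m → ℝ) ⬝ᵥ
        (fderiv ℝ g x (EuclideanSpace.single ℓ 1)).mulVec (fun i => 𝒰 (g x) i q.1.2)) xs
      simp only [dotProduct, Matrix.mulVec]
      exact tendsto_finset_sum _ fun r _ =>
        (hUe r q.1.1).mul (tendsto_finset_sum _ fun t _ => (hAe r t).mul (hUe t q.1.2))
    · simp only [hV, Sum.elim_inr]
      have hscal : ContDiff ℝ 2 (fun y => h y i) := by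
        have : (fun y => h y i) = (EuclideanSpace.proj (𝕜 := ℝ) i) ∘ h := by
          funext y; simp
        rw [this]
        exact (EuclideanSpace.proj (𝕜 := ℝ) i).contDiff.comp hh
      have : (fun x => gradient (fun y => h y i) x)
          = fun x => (InnerProductSpace.toDual ℝ _).symm (fderiv ℝ (fun y => h y i) x) := by
        funext x; rfl
      rw [this]
      exact ((InnerProductSpace.toDual ℝ _).symm.continuous.comp
        (hscal.continuous_fderiv two_ne_zero)).continuousAt
  have hkey := key_wcr_isc V xs hVcont
  refine Iff.trans (Iff.trans ?_ hkey) ?_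
  · exact Iff.rfl
  · constructor
    · intro H d hd xk hxk
      obtain ⟨dk, h1, h2⟩ := H d ((hiff xs d).mp hd) xk hxk
      exact ⟨dk, h1, fun k => (hiff (xk k) (dk k)).mpr (h2 k)⟩
    · intro H d hd xk hxk
      obtain ⟨dk, h1, h2⟩ := H d ((hiff xs d).mpr hd) xk hxk
      exact ⟨dk, h1, fun k i => (hiff (xk k) (dk k)).mp (h2 k) i⟩
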